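/- arXiv:2409.00928 — 3 statements merged into one kernel-verified Lean document; each statement's English description precedes it below -/
import Mathlib

section
/- Let h : ℝ → [0, 1/2] be C² with h ≥ 0, let β ∈ (0, 2^{-7}], s ∈ (0,1), and define ψ(y) = s + β·exp(-(√s + h(y))^{-1/2}). If (h')² + |h''| ≤ 1 pointwise, then ψ·|ψ''| ≤ 4β pointwise. -/
set_option maxHeartbeats 1000000

private lemma aux_pow_exp (n : ℕ) (hn : 1 ≤ n) (T : ℝ) (hT : 0 ≤ T) :
    T ^ n * Real.exp (-T) ≤ (n : ℝ) ^ n / Real.exp 1 ^ n := by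
  have hn0 : (0:ℝ) < n := by exact_mod_cast hn
  have h1 : Real.exp 1 * (T / n) ≤ Real.exp (T / n) := by
    have := Real.add_one_le_exp (T / n - 1)
    calc Real.exp 1 * (T / n) = Real.exp 1 * ((T/n - 1) + 1) := by ring
    _ ≤ Real.exp 1 * Real.exp (T/n - 1) := by
        exact mul_le_mul_of_nonneg_left (by linarith) (Real.exp_pos 1).le
    _ = Real.exp (T/n) := by rw [← Real.exp_add]; ring_nf
  have h2 : (Real.exp 1 * (T / n)) ^ n ≤ Real.exp T := by
    have hp := pow_le_pow_left₀ (by positivity) h1 n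
    have hE : Real.exp (T/n) ^ n = Real.exp T := by
      rw [← Real.exp_nat_mul]; congr 1; field_simp
    rwa [hE] at hp
  have h3 : Real.exp 1 ^ n * T ^ n ≤ (n:ℝ)^n * Real.exp T := by
    have hxp : (Real.exp 1 * (T / n)) ^ n = Real.exp 1 ^ n * T ^ n / (n:ℝ)^n := by
      rw [mul_pow, div_pow]; ring
    rw [hxp] at h2
    rw [div_le_iff₀ (by positivity)] at h2
    linarith [h2]
  rw [Real.exp_neg, ← div_eq_mul_inv, div_le_div_iff₀ (Real.exp_pos T) (by positivity)]
  nlinarith [h3]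

private lemma aux_bound (n : ℕ) (hn : 1 ≤ n) (T : ℝ) (hT : 0 ≤ T) (c : ℝ)
    (hc : (n:ℝ)^n / (2.7:ℝ)^n ≤ c) : T ^ n * Real.exp (-T) ≤ c := by
  refine (aux_pow_exp n hn T hT).trans (le_trans ?_ hc)
  have he : (2.7:ℝ) ^ n ≤ Real.exp 1 ^ n := by
    refine pow_le_pow_left₀ (by norm_num) ?_ n
    have := Real.exp_one_gt_d9; linarith
  exact div_le_div_of_nonneg_left (by positivity) (by positivity) he

private lemma aux_key (E T s β u v : ℝ) (hE0 : 0 < E) (hE1 : E ≤ 1)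
    (h6 : T^6 * E ≤ 125) (h5 : T^5 * E ≤ 22) (h3 : T^3 * E ≤ 2)
    (h2 : T^2 * E ≤ 1) (h1 : T^1 * E ≤ 1) (hT : 0 ≤ T)
    (hs1 : s ≤ 1) (hsT : s * T^4 ≤ 1)
    (hβ0 : 0 < β) (hβ : β ≤ 1/128)
    (hu : 0 ≤ u) (hv : 0 ≤ v) (huv : u + v ≤ 1) :
    (s + β * E) * (β * E * (1/4*T^6*u + 3/4*T^5*u + 1/2*T^3*v)) ≤ 4 * β := by
  set R : ℝ := E * (1/4*T^6*u + 3/4*T^5*u + 1/2*T^3*v) with hR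
  have hR0 : 0 ≤ R := by positivity
  have hβR : β * R ≤ 1/2 := by
    have e6 : β * (E * (1/4*T^6*u)) ≤ 1/128 * (1/4 * (u * 125)) := by
      have hb : u * (T^6*E) ≤ u * 125 := mul_le_mul_of_nonneg_left h6 hu
      calc β * (E * (1/4*T^6*u)) = β * (1/4 * (u * (T^6*E))) := by ring
        _ ≤ β * (1/4 * (u * 125)) := by nlinarith
        _ ≤ 1/128 * (1/4 * (u * 125)) := by nlinarith
    have e5 : β * (E * (3/4*T^5*u)) ≤ 1/128 * (3/4 * (u * 22)) := by
      have hb : u * (T^5*E) ≤ u * 22 := mul_le_mul_of_nonneg_left h5 hu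
      calc β * (E * (3/4*T^5*u)) = β * (3/4 * (u * (T^5*E))) := by ring
        _ ≤ β * (3/4 * (u * 22)) := by nlinarith
        _ ≤ 1/128 * (3/4 * (u * 22)) := by nlinarith
    have e3 : β * (E * (1/2*T^3*v)) ≤ 1/128 * (1/2 * (v * 2)) := by
      have hb : v * (T^3*E) ≤ v * 2 := mul_le_mul_of_nonneg_left h3 hv
      calc β * (E * (1/2*T^3*v)) = β * (1/2 * (v * (T^3*E))) := by ring
        _ ≤ β * (1/2 * (v * 2)) := by nlinarith
        _ ≤ 1/128 * (1/2 * (v * 2)) := by nlinarith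
    have hsplit : β * R = β * (E * (1/4*T^6*u)) + β * (E * (3/4*T^5*u)) + β * (E * (1/2*T^3*v)) := by
      rw [hR]; ring
    rw [hsplit]; linarith
  have hsR : s * R ≤ 1 := by
    have a2 : 0 ≤ T^2 * E := by positivity
    have a3 : 0 ≤ T^1 * E := by positivity
    have m6 : (s*T^4)*(T^2*E) ≤ 1 := mul_le_one₀ hsT a2 h2
    have m5 : (s*T^4)*(T^1*E) ≤ 1 := mul_le_one₀ hsT a3 h1
    have m3 : s*(T^3*E) ≤ 2 := by
      have a4 : 0 ≤ T^3*E := by positivity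
      have := mul_le_mul hs1 h3 a4 (by norm_num : (0:ℝ) ≤ 1)
      linarith
    have e6 : s * (E * (1/4*T^6*u)) ≤ 1/4 * u := by
      have hb : u * ((s*T^4)*(T^2*E)) ≤ u * 1 := mul_le_mul_of_nonneg_left m6 hu
      calc s * (E * (1/4*T^6*u)) = 1/4 * (u * ((s*T^4)*(T^2*E))) := by ring
        _ ≤ 1/4 * (u * 1) := by linarith
        _ = 1/4 * u := by ring
    have e5 : s * (E * (3/4*T^5*u)) ≤ 3/4 * u := by
      have hb : u * ((s*T^4)*(T^1*E)) ≤ u * 1 := mul_le_mul_of_nonneg_left m5 hu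
      calc s * (E * (3/4*T^5*u)) = 3/4 * (u * ((s*T^4)*(T^1*E))) := by ring
        _ ≤ 3/4 * (u * 1) := by linarith
        _ = 3/4 * u := by ring
    have e3 : s * (E * (1/2*T^3*v)) ≤ v := by
      have hb : v * (s*(T^3*E)) ≤ v * 2 := mul_le_mul_of_nonneg_left m3 hv
      calc s * (E * (1/2*T^3*v)) = 1/2 * (v * (s*(T^3*E))) := by ring
        _ ≤ 1/2 * (v * 2) := by linarith
        _ = v := by ring
    have hsplit : s * R = s * (E * (1/4*T^6*u)) + s * (E * (3/4*T^5*u)) + s * (E * (1/2*T^3*v)) := by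
      rw [hR]; ring
    rw [hsplit]; linarith
  have expand : (s + β * E) * (β * E * (1/4*T^6*u + 3/4*T^5*u + 1/2*T^3*v))
      = β * (s * R) + (β * (β * R)) * E := by rw [hR]; ring
  rw [expand]
  have b1 : β * (s * R) ≤ β * 1 := mul_le_mul_of_nonneg_left hsR hβ0.le
  have b2 : (β * (β * R)) * E ≤ β * (1/2) := by
    have h' : β * (β * R) ≤ β * (1/2) := mul_le_mul_of_nonneg_left hβR hβ0.le
    have h'' : (β * (β * R)) * E ≤ (β * (β * R)) * 1 :=
      mul_le_mul_of_nonneg_left hE1 (by positivity)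
    nlinarith
  linarith

private lemma aux_deriv (h : ℝ → ℝ) (hdh : Differentiable ℝ h) (hddh : Differentiable ℝ (deriv h))
    (β s : ℝ) (hs0 : 0 < s)
    (hapos : ∀ t, 0 < Real.sqrt s + h t) (y : ℝ) :
    deriv (deriv (fun t => s + β * Real.exp (-((Real.sqrt s + h t) ^ (-(1/2):ℝ))))) y
    = β * (Real.exp (-((Real.sqrt s + h y) ^ (-(1/2):ℝ))) *
        (1/4 * ((Real.sqrt s + h y) ^ (-(3/2):ℝ))^2 * (deriv h y)^2
         - 3/4 * (Real.sqrt s + h y) ^ (-(5/2):ℝ) * (deriv h y)^2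
         + 1/2 * (Real.sqrt s + h y) ^ (-(3/2):ℝ) * deriv (deriv h) y)) := by
  set a : ℝ → ℝ := fun t => Real.sqrt s + h t with ha
  have haD : ∀ t, HasDerivAt a (deriv h t) t := fun t => ((hdh t).hasDerivAt).const_add _
  have hG : ∀ t, HasDerivAt (fun t => -((a t) ^ (-(1/2):ℝ)))
      (1/2 * (a t) ^ (-(3/2):ℝ) * deriv h t) t := by
    intro t
    have hr := Real.hasDerivAt_rpow_const (x := a t) (p := (-(1/2):ℝ)) (Or.inl (hapos t).ne')
    have := (hr.comp t (haD t)).neg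
    refine this.congr_deriv ?_
    rw [show (-(1/2):ℝ) - 1 = -(3/2) by norm_num]
    ring
  have hE : ∀ t, HasDerivAt (fun t => Real.exp (-((a t) ^ (-(1/2):ℝ))))
      (Real.exp (-((a t) ^ (-(1/2):ℝ))) * (1/2 * (a t) ^ (-(3/2):ℝ) * deriv h t)) t :=
    fun t => (hG t).exp
  have hψ : ∀ t, HasDerivAt (fun t => s + β * Real.exp (-((a t) ^ (-(1/2):ℝ))))
      (β * (Real.exp (-((a t) ^ (-(1/2):ℝ))) * (1/2 * (a t) ^ (-(3/2):ℝ) * deriv h t))) t :=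
    fun t => ((hE t).const_mul β).const_add s
  have hd1 : deriv (fun t => s + β * Real.exp (-((a t) ^ (-(1/2):ℝ))))
      = fun t => β * (Real.exp (-((a t) ^ (-(1/2):ℝ))) * (1/2 * (a t) ^ (-(3/2):ℝ) * deriv h t)) := by
    funext t; exact (hψ t).deriv
  rw [hd1]
  have hM : HasDerivAt (fun t => 1/2 * (a t) ^ (-(3/2):ℝ) * deriv h t)
      ((1/2 * (-(3/2) * (a y) ^ (-(5/2):ℝ) * deriv h y)) * deriv h y
        + (1/2 * (a y) ^ (-(3/2):ℝ)) * deriv (deriv h) y) y := by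
    have hr := Real.hasDerivAt_rpow_const (x := a y) (p := (-(3/2):ℝ)) (Or.inl (hapos y).ne')
    have hA : HasDerivAt (fun t => 1/2 * (a t) ^ (-(3/2):ℝ))
        (1/2 * (-(3/2) * (a y) ^ (-(5/2):ℝ) * deriv h y)) y := by
      have := (hr.comp y (haD y)).const_mul (1/2 : ℝ)
      refine this.congr_deriv ?_
      all_goals (try rw [show (-(3/2):ℝ) - 1 = -(5/2) by norm_num]); try ring
    exact hA.mul ((hddh y).hasDerivAt)
  have h2 := ((hE y).mul hM).const_mul β
  rw [HasDerivAt.deriv (f := fun t => β * (Real.exp (-((a t) ^ (-(1/2):ℝ))) * (1/2 * (a t) ^ (-(3/2):ℝ) * deriv h t))) h2]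
  ring

theorem stmt_13 (h : ℝ → ℝ) (hC2 : ContDiff ℝ 2 h)
    (hrange : ∀ y : ℝ, h y ∈ Set.Icc (0 : ℝ) (1 / 2))
    (β s : ℝ) (hβ0 : 0 < β) (hβ : β ≤ 1 / 2 ^ 7) (hs0 : 0 < s) (hs1 : s < 1)
    (hder : ∀ y : ℝ, (deriv h y) ^ 2 + |deriv (deriv h) y| ≤ 1) :
    ∀ y : ℝ,
      (s + β * Real.exp (-1 / Real.sqrt (Real.sqrt s + h y)))
        * |deriv (deriv (fun t => s + β * Real.exp (-1 / Real.sqrt (Real.sqrt s + h t)))) y|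
      ≤ 4 * β := by
  intro y
  have hsqs : 0 < Real.sqrt s := Real.sqrt_pos.2 hs0
  have hapos : ∀ t, 0 < Real.sqrt s + h t :=
    fun t => add_pos_of_pos_of_nonneg hsqs (hrange t).1
  have hdh : Differentiable ℝ h ∧ Differentiable ℝ (deriv h) := by
    have h2 : ContDiff ℝ ((1:ℕ) + 1) h := by exact_mod_cast hC2
    rw [contDiff_succ_iff_deriv] at h2
    exact ⟨h2.1, h2.2.2.differentiable (by norm_num)⟩
  -- rewrite -1/√x as rpow
  have hpt : ∀ t, -1 / Real.sqrt (Real.sqrt s + h t)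
      = -((Real.sqrt s + h t) ^ (-(1/2):ℝ)) := by
    intro t
    rw [Real.sqrt_eq_rpow, Real.rpow_neg (hapos t).le]
    rw [neg_div, one_div]
  have hfun : (fun t => s + β * Real.exp (-1 / Real.sqrt (Real.sqrt s + h t)))
      = fun t => s + β * Real.exp (-((Real.sqrt s + h t) ^ (-(1/2):ℝ))) := by
    funext t; rw [hpt t]
  rw [hfun, hpt y, aux_deriv h hdh.1 hdh.2 β s hs0 hapos y]
  -- abbreviations
  set A : ℝ := Real.sqrt s + h y with hA
  have hApos : 0 < A := hapos y
  set T : ℝ := A ^ (-(1/2):ℝ) with hT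
  have hTpos : 0 < T := Real.rpow_pos_of_pos hApos _
  have e3 : A ^ (-(3/2):ℝ) = T^3 := by
    rw [hT, ← Real.rpow_natCast (A ^ (-(1/2):ℝ)) 3, ← Real.rpow_mul hApos.le]
    norm_num
  have e5 : A ^ (-(5/2):ℝ) = T^5 := by
    rw [hT, ← Real.rpow_natCast (A ^ (-(1/2):ℝ)) 5, ← Real.rpow_mul hApos.le]
    norm_num
  have e4 : A ^ (-(2:ℝ)) = T^4 := by
    rw [hT, ← Real.rpow_natCast (A ^ (-(1/2):ℝ)) 4, ← Real.rpow_mul hApos.le]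
    norm_num
  rw [e3, e5]
  set u : ℝ := (deriv h y)^2 with hu
  set v : ℝ := |deriv (deriv h) y| with hv
  have hu0 : 0 ≤ u := sq_nonneg _
  have hv0 : 0 ≤ v := abs_nonneg _
  have huv : u + v ≤ 1 := hder y
  set E : ℝ := Real.exp (-T) with hE
  have hE0 : 0 < E := Real.exp_pos _
  have hE1 : E ≤ 1 := Real.exp_le_one_iff.2 (by linarith)
  -- bound the absolute value
  have habs : |β * (E * (1/4 * (T^3)^2 * u - 3/4 * T^5 * u + 1/2 * T^3 * deriv (deriv h) y))|
      ≤ β * E * (1/4*T^6*u + 3/4*T^5*u + 1/2*T^3*v) := by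
    rw [abs_mul, abs_mul, abs_of_pos hβ0, abs_of_pos hE0, ← mul_assoc]
    have hle : |1/4 * (T^3)^2 * u - 3/4 * T^5 * u + 1/2 * T^3 * deriv (deriv h) y|
        ≤ 1/4*T^6*u + 3/4*T^5*u + 1/2*T^3*v := by
      rw [abs_le]
      have hb1 : T^3 * deriv (deriv h) y ≤ T^3 * v :=
        mul_le_mul_of_nonneg_left (le_abs_self _) (by positivity)
      have hb2 : T^3 * (-v) ≤ T^3 * deriv (deriv h) y :=
        mul_le_mul_of_nonneg_left (neg_abs_le _) (by positivity)
      have hb3 : 0 ≤ T^5 * u := by positivity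
      have hb4 : 0 ≤ T^6 * u := by positivity
      constructor <;> nlinarith
    exact mul_le_mul_of_nonneg_left hle (by positivity)
  refine le_trans (mul_le_mul_of_nonneg_left habs ?_) ?_
  · have : 0 < Real.exp (-T) := Real.exp_pos _
    positivity
  · -- apply key lemma
    have hsT : s * T^4 ≤ 1 := by
      rw [← e4, Real.rpow_neg hApos.le, show ((2:ℝ)) = ((2:ℕ):ℝ) by norm_num,
        Real.rpow_natCast]
      have hA2 : s ≤ A^2 := by
        have h1 : Real.sqrt s ≤ A := le_add_of_nonneg_right (hrange y).1
        nlinarith [Real.sq_sqrt hs0.le, Real.sqrt_nonneg s, sq_nonneg (h y)]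
      rw [mul_inv_le_iff₀ (by positivity)]
      linarith
    exact aux_key E T s β u v hE0 hE1
      (aux_bound 6 (by norm_num) T hTpos.le 125 (by norm_num))
      (aux_bound 5 (by norm_num) T hTpos.le 22 (by norm_num))
      (aux_bound 3 (by norm_num) T hTpos.le 2 (by norm_num))
      (aux_bound 2 (by norm_num) T hTpos.le 1 (by norm_num))
      (aux_bound 1 (by norm_num) T hTpos.le 1 (by norm_num))
      hTpos.le hs1.le hsT hβ0 (by norm_num at hβ ⊢; linarith) hu0 hv0 huv
end

section
/- Let ε ∈ (0,1), β ∈ (0,1), and h : ℝ → [0,∞). Then for every y, (h(y) + √ε)/(ε + β·exp(-(h(y)+√ε)^{-1/2})) ≥ (1/2)·min{1/β, 1/√ε}. -/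
lemma aux_sq_exp (t : ℝ) (ht : 0 < t) : 1 ≤ t ^ 2 * Real.exp (1 / t) := by
  have hu : (0:ℝ) ≤ 1 / t := by positivity
  have hsum := Real.sum_le_exp_of_nonneg hu 4
  have hexp : 1 + 1/t + (1/t)^2/2 + (1/t)^3/6 ≤ Real.exp (1/t) := by
    have : ∑ i ∈ Finset.range 4, (1/t) ^ i / i.factorial
        = 1 + 1/t + (1/t)^2/2 + (1/t)^3/6 := by
      simp [Finset.sum_range_succ, Nat.factorial]
    linarith [this ▸ hsum]
  have h1 : t ^ 2 * (1 + 1/t + (1/t)^2/2 + (1/t)^3/6) ≤ t ^ 2 * Real.exp (1/t) := by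
    apply mul_le_mul_of_nonneg_left hexp (by positivity)
  have h2 : (1:ℝ) ≤ t ^ 2 * (1 + 1/t + (1/t)^2/2 + (1/t)^3/6) := by
    have ht' : t ≠ 0 := ne_of_gt ht
    have hexpand : t ^ 2 * (1 + 1/t + (1/t)^2/2 + (1/t)^3/6)
        = t^2 + t + 1/2 + 1/(6*t) := by field_simp
    rw [hexpand]
    have h3 : (0:ℝ) < 1/(6*t) := by positivity
    have h4 : 6*t^3 + 6*t^2 - 3*t + 1 > 0 := by
      nlinarith [sq_nonneg (t - 1/4), pow_pos ht 3]
    have heq : t^2 + t + 1/2 + 1/(6*t) - 1 = (6*t^3 + 6*t^2 - 3*t + 1)/(6*t) := by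
      field_simp; ring
    have h5 : 0 < (6*t^3 + 6*t^2 - 3*t + 1)/(6*t) := div_pos h4 (by positivity)
    linarith
  linarith

lemma aux_exp_le (x : ℝ) (hx : 0 < x) : Real.exp (-1 / Real.sqrt x) ≤ x := by
  have ht : 0 < Real.sqrt x := Real.sqrt_pos.mpr hx
  have hsq : Real.sqrt x ^ 2 = x := Real.sq_sqrt hx.le
  have := aux_sq_exp (Real.sqrt x) ht
  have hpos := Real.exp_pos (1 / Real.sqrt x)
  have : Real.exp (-(1 / Real.sqrt x)) ≤ Real.sqrt x ^ 2 := by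
    rw [Real.exp_neg]
    rw [inv_le_iff_one_le_mul₀' hpos] at *
    linarith [this]
  rw [neg_div]
  linarith [hsq ▸ this]

theorem stmt_16 (ε β : ℝ) (hε : ε ∈ Set.Ioo (0 : ℝ) 1) (hβ : β ∈ Set.Ioo (0 : ℝ) 1)
    (h : ℝ → ℝ) (hnn : ∀ y : ℝ, 0 ≤ h y) :
    ∀ y : ℝ,
      (h y + Real.sqrt ε) / (ε + β * Real.exp (-1 / Real.sqrt (h y + Real.sqrt ε)))
        ≥ (1 / 2) * min (1 / β) (1 / Real.sqrt ε) := by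
  intro y
  obtain ⟨hε0, hε1⟩ := hε
  obtain ⟨hβ0, hβ1⟩ := hβ
  have hsε : 0 < Real.sqrt ε := Real.sqrt_pos.mpr hε0
  set x := h y + Real.sqrt ε with hxdef
  have hx0 : 0 < x := by have := hnn y; positivity
  have hxge : Real.sqrt ε ≤ x := by have := hnn y; linarith
  set E := Real.exp (-1 / Real.sqrt x) with hEdef
  have hE0 : 0 < E := Real.exp_pos _
  have hd : 0 < ε + β * E := by positivity
  rw [ge_iff_le, le_div_iff₀ hd]
  rcases le_total (β * E) ε with hc | hc
  · -- denom ≤ 2ε, use min ≤ 1/√ε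
    have hmin : min (1 / β) (1 / Real.sqrt ε) ≤ 1 / Real.sqrt ε := min_le_right _ _
    have hmin0 : 0 ≤ min (1 / β) (1 / Real.sqrt ε) := le_min (by positivity) (by positivity)
    have key : 1 / 2 * (1 / Real.sqrt ε) * (ε + β * E) ≤ x := by
      have h2 : ε + β * E ≤ 2 * ε := by linarith
      have : 1 / 2 * (1 / Real.sqrt ε) * (ε + β * E) ≤ 1 / 2 * (1 / Real.sqrt ε) * (2 * ε) := by
        apply mul_le_mul_of_nonneg_left h2 (by positivity)
      have hs : 1 / 2 * (1 / Real.sqrt ε) * (2 * ε) = Real.sqrt ε := by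
        have : Real.sqrt ε * Real.sqrt ε = ε := Real.mul_self_sqrt hε0.le
        field_simp
        linarith
      linarith [hs ▸ this]
    calc 1 / 2 * min (1 / β) (1 / Real.sqrt ε) * (ε + β * E)
        ≤ 1 / 2 * (1 / Real.sqrt ε) * (ε + β * E) := by
          apply mul_le_mul_of_nonneg_right _ hd.le
          linarith
      _ ≤ x := key
  · -- denom ≤ 2βE, use min ≤ 1/β
    have hmin : min (1 / β) (1 / Real.sqrt ε) ≤ 1 / β := min_le_left _ _
    have hEx : E ≤ x := aux_exp_le x hx0
    have key : 1 / 2 * (1 / β) * (ε + β * E) ≤ x := by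
      have h2 : ε + β * E ≤ 2 * (β * E) := by linarith
      have : 1 / 2 * (1 / β) * (ε + β * E) ≤ 1 / 2 * (1 / β) * (2 * (β * E)) := by
        apply mul_le_mul_of_nonneg_left h2 (by positivity)
      have hs : 1 / 2 * (1 / β) * (2 * (β * E)) = E := by field_simp
      linarith [hs ▸ this]
    calc 1 / 2 * min (1 / β) (1 / Real.sqrt ε) * (ε + β * E)
        ≤ 1 / 2 * (1 / β) * (ε + β * E) := by
          apply mul_le_mul_of_nonneg_right _ hd.le
          linarith
      _ ≤ x := key
end

section
/- Fix m ≥ 1, set κ₁ = 1/(2m+3) and κ₂ = 4m/(2m+3), and let g : [r₀, ∞) → (-∞, 1/2] (with r₀ > 0) be a C¹ solution of the ODE (m + 1 + (2 - g(r))^{-1})·g'(r) = -2m·g(r)/r. Then the quantity (2 - g(r))^{-κ₁}·g(r)·r^{κ₂} is constant in r; equivalently, (2 - g(r))^{-κ₁} g(r) = (2 - g(r₀))^{-κ₁} g(r₀) · (r₀/r)^{κ₂} for all r ≥ r₀. -/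
theorem stmt_19 (m : ℝ) (hm : 1 ≤ m) (r₀ : ℝ) (hr₀ : 0 < r₀)
    (g g' : ℝ → ℝ) (hrange : ∀ r : ℝ, r₀ ≤ r → g r ≤ 1 / 2)
    (hderiv : ∀ r : ℝ, r₀ ≤ r → HasDerivAt g (g' r) r)
    (hODE : ∀ r : ℝ, r₀ ≤ r →
      (m + 1 + (2 - g r)⁻¹) * g' r = -2 * m * g r / r) :
    ∀ r : ℝ, r₀ ≤ r →
      (2 - g r) ^ (-(1 / (2 * m + 3)) : ℝ) * g r * r ^ ((4 * m / (2 * m + 3)) : ℝ)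
        = (2 - g r₀) ^ (-(1 / (2 * m + 3)) : ℝ) * g r₀ * r₀ ^ ((4 * m / (2 * m + 3)) : ℝ) ∧
      (2 - g r) ^ (-(1 / (2 * m + 3)) : ℝ) * g r
        = (2 - g r₀) ^ (-(1 / (2 * m + 3)) : ℝ) * g r₀ * (r₀ / r) ^ ((4 * m / (2 * m + 3)) : ℝ) := by
  have hK : (2 * m + 3) ≠ 0 := by nlinarith
  have ha : ∀ r, r₀ ≤ r → (0:ℝ) < 2 - g r := fun r hr => by have := hrange r hr; linarith
  have hrpos : ∀ r, r₀ ≤ r → (0:ℝ) < r := fun r hr => lt_of_lt_of_le hr₀ hr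
  set c₁ : ℝ := -(1 / (2 * m + 3)) with hc₁
  set c₂ : ℝ := 4 * m / (2 * m + 3) with hc₂
  set F : ℝ → ℝ := fun s => (2 - g s) ^ c₁ * g s * s ^ c₂ with hFdef
  have hF : ∀ r, r₀ ≤ r → HasDerivAt F 0 r := by
    intro r hr
    have hgr := hderiv r hr
    have hapos := ha r hr
    have hrp := hrpos r hr
    have h2g : HasDerivAt (fun s => 2 - g s) (0 - g' r) r := (hasDerivAt_const r 2).sub hgr
    have h1 : HasDerivAt (fun s => (2 - g s) ^ c₁) ((0 - g' r) * c₁ * (2 - g r) ^ (c₁ - 1)) r :=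
      h2g.rpow_const (Or.inl (ne_of_gt hapos))
    have h2 := h1.mul hgr
    have h3 : HasDerivAt (fun s : ℝ => s ^ c₂) (c₂ * r ^ (c₂ - 1)) r :=
      Real.hasDerivAt_rpow_const (Or.inl (ne_of_gt hrp))
    have h4 := h2.mul h3
    convert h4 using 1
    · rfl
    · rfl
    · rfl
    simp only [Pi.mul_apply]
    have e1 : (2 - g r) ^ (c₁ - 1) = (2 - g r) ^ c₁ / (2 - g r) := by
      rw [Real.rpow_sub hapos, Real.rpow_one]
    have e2 : r ^ (c₂ - 1) = r ^ c₂ / r := by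
      rw [Real.rpow_sub hrp, Real.rpow_one]
    have hODE' : ((m + 1) * (2 - g r) + 1) * g' r * r = -2 * m * g r * (2 - g r) := by
      have h := hODE r hr
      field_simp at h
      linarith [h]
    rw [e1, e2]
    have hane : (2 - g r) ≠ 0 := ne_of_gt hapos
    have hrne : r ≠ 0 := ne_of_gt hrp
    set P := (2 - g r) ^ c₁ with hP
    set Q := r ^ c₂ with hQ
    rw [hc₁, hc₂]
    field_simp
    linear_combination (-2 * P * Q) * hODE'
  have key : ∀ r, r₀ ≤ r → F r = F r₀ := by
    intro r hr
    rcases eq_or_lt_of_le hr with rfl | hlt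
    · rfl
    · have hcont : ContinuousOn F (Set.Icc r₀ r) := fun x hx =>
        (hF x hx.1).continuousAt.continuousWithinAt
      have hd : ∀ x ∈ Set.Ico r₀ r, HasDerivWithinAt F 0 (Set.Ici x) x := fun x hx =>
        (hF x hx.1).hasDerivWithinAt
      exact constant_of_has_deriv_right_zero hcont hd r (Set.right_mem_Icc.2 hr)
  intro r hr
  have hk := key r hr
  have hrp := hrpos r hr
  have hrc : (0:ℝ) < r ^ c₂ := Real.rpow_pos_of_pos hrp c₂
  constructor
  · exact hk
  · have hdiv : (r₀ / r) ^ c₂ = r₀ ^ c₂ / r ^ c₂ := Real.div_rpow hr₀.le hrp.le c₂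
    have hk' : (2 - g r) ^ c₁ * g r * r ^ c₂ = (2 - g r₀) ^ c₁ * g r₀ * r₀ ^ c₂ := hk
    have e3 : (2 - g r₀) ^ c₁ * g r₀ * (r₀ ^ c₂ / r ^ c₂)
        = ((2 - g r₀) ^ c₁ * g r₀ * r₀ ^ c₂) / r ^ c₂ := by ring
    rw [hdiv, e3, eq_div_iff hrc.ne']
    linarith [hk']
end
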